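/- For each i ∈ {1,…,2m} and j ∈ {1,…,n}, the sets g_↓ ∩ T_ij and g_↓ ∩ R_ij are convex (each is a line segment on the corresponding side of the cell, possibly empty). -/
import Mathlib


open Set

noncomputable section

/-- The piecewise linear closed curve through the vertices `x 0, x 1, …`:
`f(i+α) = (1-α) • x i + α • x (i+1)`. -/
def fCurve {k : ℕ} (x : ℕ → EuclideanSpace ℝ (Fin k)) (t : ℝ) :
    EuclideanSpace ℝ (Fin k) :=
  (1 - Int.fract t) • x (⌊t⌋.toNat) + Int.fract t • x (⌊t⌋.toNat + 1)

/-- The extension of the curve from `[0,m]` to `[0,2m]` by `f(u) = f(u-m)` for `u > m`. -/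
def fCurveExt {k : ℕ} (m : ℕ) (x : ℕ → EuclideanSpace ℝ (Fin k)) (u : ℝ) :
    EuclideanSpace ℝ (Fin k) :=
  if u ≤ m then fCurve x u else fCurve x (u - m)

/-- The rectangle `D = [0,2m] × [0,n]`. -/
def Dfull (m n : ℕ) : Set (ℝ × ℝ) :=
  Icc (0:ℝ) (2*(m:ℝ)) ×ˢ Icc (0:ℝ) (n:ℝ)

/-- The free space `D_ε = {(u,v) ∈ D : dist (f_X u) (f_Y v) ≤ ε}`. -/
def Dfree {k : ℕ} (m n : ℕ) (x y : ℕ → EuclideanSpace ℝ (Fin k)) (ε : ℝ) :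
    Set (ℝ × ℝ) :=
  {p ∈ Dfull m n | dist (fCurveExt m x p.1) (fCurve y p.2) ≤ ε}

/-- The top side `T = [0,2m] × {n}` of `D`. -/
def Tside (m n : ℕ) : Set (ℝ × ℝ) := Icc (0:ℝ) (2*(m:ℝ)) ×ˢ {(n:ℝ)}

/-- The bottom side `B = [0,2m] × {0}` of `D`. -/
def Bside (m : ℕ) : Set (ℝ × ℝ) := Icc (0:ℝ) (2*(m:ℝ)) ×ˢ {(0:ℝ)}

/-- A monotone (non-decreasing) path: a connected subset `γ ⊆ Dε` with
`(u-u')·(v-v') ≥ 0` for all `(u,v), (u',v') ∈ γ`. -/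
def IsMonPath (Dε γ : Set (ℝ × ℝ)) : Prop :=
  γ ⊆ Dε ∧ IsConnected γ ∧
    ∀ p ∈ γ, ∀ q ∈ γ, (p.1 - q.1) * (p.2 - q.2) ≥ 0

/-- Two points are mutually reachable if some monotone path contains both. -/
def Reach (Dε : Set (ℝ × ℝ)) (p q : ℝ × ℝ) : Prop :=
  ∃ γ : Set (ℝ × ℝ), IsMonPath Dε γ ∧ p ∈ γ ∧ q ∈ γ

/-- `g↓`: the points of `Dε` mutually reachable with at least one point of `B`. -/
def gDown (m : ℕ) (Dε : Set (ℝ × ℝ)) : Set (ℝ × ℝ) :=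
  {p ∈ Dε | ∃ q ∈ Bside m, Reach Dε p q}

/-- `g↑`: the points of `Dε` mutually reachable with at least one point of `T`. -/
def gUp (m n : ℕ) (Dε : Set (ℝ × ℝ)) : Set (ℝ × ℝ) :=
  {p ∈ Dε | ∃ q ∈ Tside m n, Reach Dε p q}

/-- The pointer `r↑(p)`: the maximum `u* ∈ [0,2m]` such that `p` and `(u*, n)`
are mutually reachable. -/
def rUp (m n : ℕ) (Dε : Set (ℝ × ℝ)) (p : ℝ × ℝ) : ℝ :=
  sSup {u : ℝ | u ∈ Icc (0:ℝ) (2*(m:ℝ)) ∧ Reach Dε p (u, (n:ℝ))}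

/-- The pointer `r↓(p)`: for `p` with `p.2 > 0`, the maximum `u* ∈ [0,2m]` such
that `p` and `(u*, 0)` are mutually reachable; on the bottom side `r↓(u,0) = u`. -/
def rDown (m : ℕ) (Dε : Set (ℝ × ℝ)) (p : ℝ × ℝ) : ℝ :=
  if p.2 = 0 then p.1
  else sSup {u : ℝ | u ∈ Icc (0:ℝ) (2*(m:ℝ)) ∧ Reach Dε p (u, (0:ℝ))}

/-- The cell `D_ij = [i-1,i] × [j-1,j]`. -/
def cellD (i j : ℕ) : Set (ℝ × ℝ) :=
  Icc ((i:ℝ)-1) (i:ℝ) ×ˢ Icc ((j:ℝ)-1) (j:ℝ)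

/-- The top side `T_ij` of the cell `D_ij`. -/
def cellT (i j : ℕ) : Set (ℝ × ℝ) := Icc ((i:ℝ)-1) (i:ℝ) ×ˢ {(j:ℝ)}

/-- The bottom side `B_ij` of the cell `D_ij`. -/
def cellB (i j : ℕ) : Set (ℝ × ℝ) := Icc ((i:ℝ)-1) (i:ℝ) ×ˢ {((j:ℝ)-1)}

/-- The right side `R_ij` of the cell `D_ij`. -/
def cellR (i j : ℕ) : Set (ℝ × ℝ) := {(i:ℝ)} ×ˢ Icc ((j:ℝ)-1) (j:ℝ)

/-- The left side `L_ij` of the cell `D_ij`. -/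
def cellL (i j : ℕ) : Set (ℝ × ℝ) := {((i:ℝ)-1)} ×ˢ Icc ((j:ℝ)-1) (j:ℝ)

/-- The partial order `≼` on `D`: `(u1,v1) ≼ (u2,v2)` iff `u1 ≤ u2` and `v1 ≥ v2`. -/
def prec (p q : ℝ × ℝ) : Prop := p.1 ≤ q.1 ∧ q.2 ≤ p.2

section Helpers

variable {k : ℕ}

lemma comb_fst (a b : ℝ) (p q : ℝ × ℝ) : (a • p + b • q).1 = a * p.1 + b * q.1 := rfl
lemma comb_snd (a b : ℝ) (p q : ℝ × ℝ) : (a • p + b • q).2 = a * p.2 + b * q.2 := rfl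

lemma fCurve_affine (x : ℕ → EuclideanSpace ℝ (Fin k)) (i0 : ℕ) {u : ℝ}
    (h1 : (i0 : ℝ) ≤ u) (h2 : u ≤ (i0 : ℝ) + 1) :
    fCurve x u = x i0 + (u - (i0 : ℝ)) • (x (i0 + 1) - x i0) := by
  rcases eq_or_lt_of_le h2 with h2 | h2
  · subst h2
    unfold fCurve
    rw [show (i0 : ℝ) + 1 = ((i0 + 1 : ℕ) : ℝ) by push_cast; ring]
    rw [Int.fract_natCast, Int.floor_natCast]
    simp only [Int.toNat_natCast]
    push_cast
    module
  · have hf : ⌊u⌋ = (i0 : ℤ) := by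
      rw [Int.floor_eq_iff]
      constructor
      · exact_mod_cast h1
      · push_cast; linarith
    have hfr : Int.fract u = u - (i0 : ℝ) := by
      rw [Int.fract, hf]; push_cast; ring
    unfold fCurve
    rw [hf, hfr]
    simp only [Int.toNat_natCast]
    module
lemma fCurve_nat (x : ℕ → EuclideanSpace ℝ (Fin k)) (i0 : ℕ) :
    fCurve x (i0 : ℝ) = x i0 := by
  rw [fCurve_affine x i0 (le_refl _) (by linarith)]
  simp

lemma fCurveExt_affine (m : ℕ) (x : ℕ → EuclideanSpace ℝ (Fin k)) (hx : x m = x 0)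
    {i : ℕ} (hi1 : 1 ≤ i) :
    ∃ A B : EuclideanSpace ℝ (Fin k),
      ∀ u ∈ Icc ((i:ℝ) - 1) (i:ℝ), fCurveExt m x u = A + (u - ((i:ℝ) - 1)) • B := by
  have hc1 : ((i - 1 : ℕ) : ℝ) = (i : ℝ) - 1 := by
    push_cast [Nat.cast_sub hi1]; ring
  rcases le_or_gt i m with him | him
  · refine ⟨x (i-1), x i - x (i-1), fun u hu => ?_⟩
    have hum : u ≤ (m : ℝ) := le_trans hu.2 (by exact_mod_cast him)
    rw [fCurveExt, if_pos hum, fCurve_affine x (i-1) (by rw [hc1]; exact hu.1)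
      (by rw [hc1]; have := hu.2; linarith)]
    rw [show i - 1 + 1 = i from Nat.succ_pred_eq_of_pos hi1, hc1]
  · -- m < i
    have hmi : m + 1 ≤ i := him
    have hc2 : ((i - 1 - m : ℕ) : ℝ) = (i : ℝ) - 1 - m := by
      push_cast [Nat.cast_sub hi1, Nat.cast_sub (by omega : m ≤ i - 1)]; ring
    have hsucc : i - 1 - m + 1 = i - m := by omega
    refine ⟨x (i-1-m), x (i-m) - x (i-1-m), fun u hu => ?_⟩
    have hum : (m : ℝ) ≤ u := by
      have : (m : ℝ) ≤ (i : ℝ) - 1 := by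
        have : (m : ℝ) + 1 ≤ (i : ℝ) := by exact_mod_cast hmi
        linarith
      linarith [hu.1]
    have key : fCurveExt m x u = fCurve x (u - m) := by
      rcases eq_or_lt_of_le hum with h | h
      · -- u = m, so i - 1 = m
        have hieq : (i : ℝ) - 1 = (m : ℝ) := le_antisymm (by linarith [hu.1, h.symm.le]) (by
          have : (m : ℝ) + 1 ≤ (i : ℝ) := by exact_mod_cast hmi
          linarith)
        rw [fCurveExt, if_pos h.symm.le, ← h, sub_self]
        rw [show (0:ℝ) = ((0:ℕ):ℝ) by norm_num, fCurve_nat, fCurve_nat, hx]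
      · rw [fCurveExt, if_neg (not_le.mpr h)]
    rw [key, fCurve_affine x (i-1-m) (by rw [hc2]; linarith [hu.1])
      (by rw [hc2]; have := hu.2; linarith), hsucc, hc2]
    congr 2
    ring
lemma comb_smul {E : Type*} [AddCommGroup E] [Module ℝ E] (A B : E) (c a b u v : ℝ)
    (hab : a + b = 1) :
    A + (a * u + b * v - c) • B = a • (A + (u - c) • B) + b • (A + (v - c) • B) := by
  have hb : b = 1 - a := by linarith
  subst hb
  module

lemma dist_comb_le {E : Type*} [NormedAddCommGroup E] [NormedSpace ℝ E]
    {V1 V2 c : E} {ε a b : ℝ} (ha : 0 ≤ a) (hb : 0 ≤ b) (hab : a + b = 1)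
    (h1 : dist V1 c ≤ ε) (h2 : dist V2 c ≤ ε) : dist (a • V1 + b • V2) c ≤ ε := by
  have := (convexOn_dist c convex_univ).2 (mem_univ V1) (mem_univ V2) ha hb hab
  calc dist (a • V1 + b • V2) c ≤ a * dist V1 c + b * dist V2 c := this
    _ ≤ a * ε + b * ε := by gcongr
    _ = ε := by rw [← add_mul, hab, one_mul]

lemma convex_DfreeT (m n : ℕ) (x y : ℕ → EuclideanSpace ℝ (Fin k))
    (hx : x m = x 0) (ε : ℝ) {i j : ℕ} (hi1 : 1 ≤ i) :
    Convex ℝ (Dfree m n x y ε ∩ cellT i j) := by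
  obtain ⟨A, B, hAB⟩ := fCurveExt_affine m x hx hi1
  intro p hp q hq a b ha hb hab
  have hpT : p.1 ∈ Icc ((i:ℝ)-1) (i:ℝ) ∧ p.2 = (j:ℝ) := by
    simpa only [cellT, Set.mem_prod, Set.mem_singleton_iff, Set.mem_Icc] using hp.2
  have hqT : q.1 ∈ Icc ((i:ℝ)-1) (i:ℝ) ∧ q.2 = (j:ℝ) := by
    simpa only [cellT, Set.mem_prod, Set.mem_singleton_iff, Set.mem_Icc] using hq.2
  have hw1 : (a • p + b • q).1 = a * p.1 + b * q.1 := rfl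
  have hw2 : (a • p + b • q).2 = a * p.2 + b * q.2 := rfl
  have hwIcc : (a • p + b • q).1 ∈ Icc ((i:ℝ)-1) (i:ℝ) := by
    rw [hw1]; exact (convex_Icc _ _) hpT.1 hqT.1 ha hb hab
  have hwj : (a • p + b • q).2 = (j:ℝ) := by
    rw [hw2, hpT.2, hqT.2, ← add_mul, hab, one_mul]
  refine ⟨⟨?_, ?_⟩, ?_⟩
  · -- Dfull
    exact Convex.prod (convex_Icc _ _) (convex_Icc _ _) hp.1.1 hq.1.1 ha hb hab
  · -- dist
    have key : fCurveExt m x (a • p + b • q).1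
        = a • fCurveExt m x p.1 + b • fCurveExt m x q.1 := by
      rw [hAB _ hwIcc, hAB _ hpT.1, hAB _ hqT.1, hw1, comb_smul _ _ _ _ _ _ _ hab]
    rw [key, hwj]
    have h1 := hp.1.2
    have h2 := hq.1.2
    rw [hpT.2] at h1
    rw [hqT.2] at h2
    exact dist_comb_le ha hb hab h1 h2
  · -- cellT
    simp only [cellT, mem_prod, mem_singleton_iff]
    exact ⟨hwIcc, hwj⟩

lemma convex_DfreeR (m n : ℕ) (x y : ℕ → EuclideanSpace ℝ (Fin k)) (ε : ℝ)
    {i j : ℕ} (hj1 : 1 ≤ j) :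
    Convex ℝ (Dfree m n x y ε ∩ cellR i j) := by
  have hc1 : ((j - 1 : ℕ) : ℝ) = (j : ℝ) - 1 := by
    push_cast [Nat.cast_sub hj1]; ring
  have hAB : ∀ v ∈ Icc ((j:ℝ)-1) (j:ℝ),
      fCurve y v = y (j-1) + (v - ((j:ℝ)-1)) • (y (j-1+1) - y (j-1)) := by
    intro v hv
    rw [fCurve_affine y (j-1) (by rw [hc1]; exact hv.1) (by rw [hc1]; linarith [hv.2]), hc1]
  intro p hp q hq a b ha hb hab
  have hpR : p.1 = (i:ℝ) ∧ p.2 ∈ Icc ((j:ℝ)-1) (j:ℝ) := by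
    simpa only [cellR, Set.mem_prod, Set.mem_singleton_iff, Set.mem_Icc] using hp.2
  have hqR : q.1 = (i:ℝ) ∧ q.2 ∈ Icc ((j:ℝ)-1) (j:ℝ) := by
    simpa only [cellR, Set.mem_prod, Set.mem_singleton_iff, Set.mem_Icc] using hq.2
  have hw1 : (a • p + b • q).1 = a * p.1 + b * q.1 := rfl
  have hw2 : (a • p + b • q).2 = a * p.2 + b * q.2 := rfl
  have hwIcc : (a • p + b • q).2 ∈ Icc ((j:ℝ)-1) (j:ℝ) := by
    rw [hw2]; exact (convex_Icc _ _) hpR.2 hqR.2 ha hb hab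
  have hwi : (a • p + b • q).1 = (i:ℝ) := by
    rw [hw1, hpR.1, hqR.1, ← add_mul, hab, one_mul]
  refine ⟨⟨?_, ?_⟩, ?_⟩
  · exact Convex.prod (convex_Icc _ _) (convex_Icc _ _) hp.1.1 hq.1.1 ha hb hab
  · have key : fCurve y (a • p + b • q).2
        = a • fCurve y p.2 + b • fCurve y q.2 := by
      rw [hAB _ hwIcc, hAB _ hpR.2, hAB _ hqR.2, hw2, comb_smul _ _ _ _ _ _ _ hab]
    rw [key, hwi]
    have h1 := hp.1.2
    have h2 := hq.1.2
    rw [hpR.1] at h1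
    rw [hqR.1] at h2
    have : dist (fCurveExt m x (i:ℝ)) (a • fCurve y p.2 + b • fCurve y q.2) ≤ ε := by
      rw [dist_comm]
      exact dist_comb_le ha hb hab (by rw [dist_comm]; exact h1) (by rw [dist_comm]; exact h2)
    exact this
  · simp only [cellR, mem_prod, mem_singleton_iff]
    exact ⟨hwi, hwIcc⟩
lemma chain_le {Dε γ : Set (ℝ × ℝ)} (hγ : IsMonPath Dε γ) :
    ∀ a ∈ γ, ∀ b ∈ γ, a.1 + a.2 ≤ b.1 + b.2 → a.1 ≤ b.1 ∧ a.2 ≤ b.2 := by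
  intro a ha b hb hab
  have h := hγ.2.2 a ha b hb
  constructor <;> nlinarith [h]

lemma trunc_connected {Dε γ : Set (ℝ × ℝ)} (hγ : IsMonPath Dε γ) {p : ℝ × ℝ} (hp : p ∈ γ) :
    IsConnected {a ∈ γ | a.1 ≤ p.1 ∧ a.2 ≤ p.2} := by
  classical
  set φ : ℝ × ℝ → ℝ := fun a => a.1 + a.2 with hφdef
  have hφcont : Continuous φ := by fun_prop
  set S : Set ℝ := φ '' γ with hSdef
  have hSconn : IsConnected S := (hγ.2.1).image φ hφcont.continuousOn
  have hex : ∀ t : ℝ, ∃ a : ℝ × ℝ, t ∈ S → a ∈ γ ∧ φ a = t := by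
    intro t
    by_cases h : t ∈ S
    · obtain ⟨a, ha, hat⟩ := h
      exact ⟨a, fun _ => ⟨ha, hat⟩⟩
    · exact ⟨p, fun h' => absurd h' h⟩
  choose ψ hψ using hex
  have hψγ : ∀ t ∈ S, ψ t ∈ γ := fun t ht => (hψ t ht).1
  have hψφ : ∀ t ∈ S, φ (ψ t) = t := fun t ht => (hψ t ht).2
  have hmono : ∀ s ∈ S, ∀ t ∈ S, s ≤ t → (ψ s).1 ≤ (ψ t).1 ∧ (ψ s).2 ≤ (ψ t).2 := by
    intro s hs t ht hst
    refine chain_le hγ _ (hψγ s hs) _ (hψγ t ht) ?_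
    have h1 := hψφ s hs
    have h2 := hψφ t ht
    simp only [hφdef] at h1 h2
    linarith
  have hcont : ContinuousOn ψ S := by
    refine LipschitzOnWith.continuousOn (K := 1) ?_
    rw [lipschitzOnWith_iff_dist_le_mul]
    intro s hs t ht
    have key : ∀ s' ∈ S, ∀ t' ∈ S, s' ≤ t' → dist (ψ s') (ψ t') ≤ 1 * dist s' t' := by
      intro s' hs' t' ht' h
      obtain ⟨h1, h2⟩ := hmono s' hs' t' ht' h
      have e1 := hψφ s' hs'
      have e2 := hψφ t' ht'
      simp only [hφdef] at e1 e2
      rw [Prod.dist_eq, Real.dist_eq, Real.dist_eq, Real.dist_eq, one_mul,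
        abs_of_nonpos (show s' - t' ≤ 0 by linarith)]
      apply max_le <;> rw [abs_le] <;> constructor <;> linarith
    rcases le_total s t with h | h
    · exact key s hs t ht h
    · rw [dist_comm, dist_comm s t]; exact key t ht s hs h
  have himg : ψ '' (S ∩ Iic (φ p)) = {a ∈ γ | a.1 ≤ p.1 ∧ a.2 ≤ p.2} := by
    apply Subset.antisymm
    · rintro _ ⟨t, ⟨htS, htle⟩, rfl⟩
      refine ⟨hψγ t htS, ?_⟩
      refine chain_le hγ _ (hψγ t htS) p hp ?_
      have := hψφ t htS
      simp only [hφdef] at this ⊢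
      rw [this]
      exact htle
    · rintro a ⟨haγ, h1, h2⟩
      have hin : φ a ∈ S := mem_image_of_mem φ haγ
      refine ⟨φ a, ⟨hin, by simp only [hφdef, mem_Iic]; exact add_le_add h1 h2⟩, ?_⟩
      have e := hψφ _ hin
      have h1' := chain_le hγ _ (hψγ _ hin) a haγ (le_of_eq e)
      have h2' := chain_le hγ a haγ _ (hψγ _ hin) (ge_of_eq e)
      exact Prod.ext (le_antisymm h1'.1 h2'.1) (le_antisymm h1'.2 h2'.2)
  rw [← himg]
  refine IsConnected.image ?_ ψ (hcont.mono inter_subset_left)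
  refine ⟨⟨φ p, mem_image_of_mem φ hp, mem_Iic.mpr le_rfl⟩, ?_⟩
  exact (hSconn.isPreconnected.ordConnected.inter ordConnected_Iic).isPreconnected
lemma comb_between {a b u v : ℝ} (ha : 0 ≤ a) (hb : 0 ≤ b) (hab : a + b = 1) (huv : u ≤ v) :
    u ≤ a * u + b * v ∧ a * u + b * v ≤ v := by
  have e1 : a * u + b * v = u + b * (v - u) := by linear_combination u * hab
  have e2 : a * u + b * v = v - a * (v - u) := by linear_combination v * hab
  constructor
  · rw [e1]; nlinarith [mul_nonneg hb (sub_nonneg.2 huv)]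
  · rw [e2]; nlinarith [mul_nonneg ha (sub_nonneg.2 huv)]

lemma reach_extend {Dε γ : Set (ℝ × ℝ)} (hγ : IsMonPath Dε γ)
    {p b z : ℝ × ℝ} (hp : p ∈ γ) (hb : b ∈ γ)
    (hb1 : b.1 ≤ p.1) (hb2 : b.2 ≤ p.2)
    (hz1 : p.1 ≤ z.1) (hz2 : p.2 ≤ z.2)
    (hseg : segment ℝ p z ⊆ Dε) :
    Reach Dε z b := by
  have hsegge : ∀ c ∈ segment ℝ p z, p.1 ≤ c.1 ∧ p.2 ≤ c.2 ∧ c.1 ≤ z.1 ∧ c.2 ≤ z.2 := by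
    rintro c ⟨a, b', ha, hb', hab, rfl⟩
    rw [comb_fst, comb_snd]
    obtain ⟨c1, c2⟩ := comb_between ha hb' hab hz1
    obtain ⟨c3, c4⟩ := comb_between ha hb' hab hz2
    exact ⟨c1, c3, c2, c4⟩
  refine ⟨{a ∈ γ | a.1 ≤ p.1 ∧ a.2 ≤ p.2} ∪ segment ℝ p z, ⟨?_, ?_, ?_⟩,
    Or.inr (right_mem_segment ℝ p z), Or.inl ⟨hb, hb1, hb2⟩⟩
  · rintro a (⟨h, _⟩ | h)
    exacts [hγ.1 h, hseg h]
  · refine IsConnected.union ⟨p, ⟨hp, le_rfl, le_rfl⟩, left_mem_segment ℝ p z⟩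
      (trunc_connected hγ hp) ((convex_segment p z).isConnected ⟨p, left_mem_segment ℝ p z⟩)
  · rintro c (⟨hcγ, hc1, hc2⟩ | hcseg) d (⟨hdγ, hd1, hd2⟩ | hdseg)
    · exact hγ.2.2 c hcγ d hdγ
    · obtain ⟨e1, e2, _, _⟩ := hsegge d hdseg
      nlinarith
    · obtain ⟨e1, e2, _, _⟩ := hsegge c hcseg
      nlinarith
    · obtain ⟨a1, b1, ha1, hb1', hab1, rfl⟩ := hcseg
      obtain ⟨a2, b2, ha2, hb2', hab2, rfl⟩ := hdseg
      rw [comb_fst, comb_snd, comb_fst, comb_snd]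
      have e1 : a1 * p.1 + b1 * z.1 - (a2 * p.1 + b2 * z.1) = (b1 - b2) * (z.1 - p.1) := by
        linear_combination p.1 * hab1 - p.1 * hab2
      have e2 : a1 * p.2 + b1 * z.2 - (a2 * p.2 + b2 * z.2) = (b1 - b2) * (z.2 - p.2) := by
        linear_combination p.2 * hab1 - p.2 * hab2
      rw [ge_iff_le, e1, e2]
      nlinarith [sq_nonneg (b1 - b2), mul_nonneg (sub_nonneg.2 hz1) (sub_nonneg.2 hz2)]

lemma gDown_segment {m : ℕ} {Dε C : Set (ℝ × ℝ)}
    (hC : Convex ℝ (Dε ∩ C))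
    (hCm : ∀ a ∈ C, 0 ≤ a.2 ∧ 0 ≤ a.1 ∧ a.1 ≤ 2 * (m : ℝ))
    {p q : ℝ × ℝ} (hp : p ∈ gDown m Dε ∩ C) (hq : q ∈ gDown m Dε ∩ C)
    (h1 : p.1 ≤ q.1) (h2 : p.2 ≤ q.2) :
    segment ℝ p q ⊆ gDown m Dε ∩ C := by
  intro z hz
  have hpD : p ∈ Dε := hp.1.1
  have hqD : q ∈ Dε := hq.1.1
  have hzDC : z ∈ Dε ∩ C := hC.segment_subset ⟨hpD, hp.2⟩ ⟨hqD, hq.2⟩ hz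
  have hzge : p.1 ≤ z.1 ∧ p.2 ≤ z.2 := by
    obtain ⟨a, b', ha, hb', hab, rfl⟩ := hz
    rw [comb_fst, comb_snd]
    exact ⟨(comb_between ha hb' hab h1).1, (comb_between ha hb' hab h2).1⟩
  have hsegsub : segment ℝ p z ⊆ Dε := by
    intro c hc
    exact ((hC.segment_subset ⟨hpD, hp.2⟩ ⟨hqD, hq.2⟩)
      ((convex_segment p q).segment_subset (left_mem_segment ℝ p q) hz hc)).1
  refine ⟨⟨hzDC.1, ?_⟩, hzDC.2⟩
  obtain ⟨_, b0, hb0B, hreach⟩ := hp.1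
  have hb0 : b0.2 = 0 ∧ b0.1 ∈ Icc (0:ℝ) (2*(m:ℝ)) := by
    obtain ⟨h1', h2'⟩ := (Set.mem_prod.mp hb0B)
    exact ⟨h2', h1'⟩
  rcases eq_or_lt_of_le (hCm p hp.2).1 with hp0 | hp0
  · -- p.2 = 0 : p itself is on the bottom side
    refine ⟨p, Set.mem_prod.mpr ⟨⟨(hCm p hp.2).2.1, (hCm p hp.2).2.2⟩, hp0.symm⟩, ?_⟩
    have hsing : IsMonPath Dε {p} := by
      refine ⟨singleton_subset_iff.2 hpD, isConnected_singleton, ?_⟩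
      rintro a ha c hc
      simp only [mem_singleton_iff] at ha hc
      subst ha; subst hc; simp
    exact reach_extend hsing rfl rfl le_rfl le_rfl hzge.1 hzge.2 hsegsub
  · obtain ⟨γ, hγ, hpγ, hb0γ⟩ := hreach
    have hmono := hγ.2.2 b0 hb0γ p hpγ
    have hb01 : b0.1 ≤ p.1 := by nlinarith [hb0.1, hp0]
    exact ⟨b0, hb0B, reach_extend hγ hpγ hb0γ hb01 (by rw [hb0.1]; exact hp0.le)
      hzge.1 hzge.2 hsegsub⟩
theorem stmt9
    (k m n : ℕ) (hk : 1 ≤ k) (hm : 1 ≤ m) (hn : 1 ≤ n)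
    (x y : ℕ → EuclideanSpace ℝ (Fin k)) (hx : x m = x 0) (hy : y n = y 0)
    (ε : ℝ) (hε : 0 ≤ ε)
    (Dε : Set (ℝ × ℝ)) (hDε : Dε = Dfree m n x y ε)
    (i j : ℕ) (hi1 : 1 ≤ i) (hi2 : i ≤ 2*m) (hj1 : 1 ≤ j) (hj2 : j ≤ n) :
    Convex ℝ (gDown m Dε ∩ cellT i j) ∧ Convex ℝ (gDown m Dε ∩ cellR i j) := by
  subst hDε
  have hi2' : (i:ℝ) ≤ 2*(m:ℝ) := by exact_mod_cast hi2
  have hi1' : (1:ℝ) ≤ (i:ℝ) := by exact_mod_cast hi1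
  have hj1' : (1:ℝ) ≤ (j:ℝ) := by exact_mod_cast hj1
  constructor
  · have hC := convex_DfreeT m n x y hx ε (i := i) (j := j) hi1
    have hCm : ∀ a ∈ cellT i j, 0 ≤ a.2 ∧ 0 ≤ a.1 ∧ a.1 ≤ 2*(m:ℝ) := by
      intro a ha
      obtain ⟨h1, h2⟩ := Set.mem_prod.mp ha
      rw [mem_singleton_iff] at h2
      exact ⟨by rw [h2]; positivity, by linarith [h1.1], le_trans h1.2 hi2'⟩
    rw [convex_iff_segment_subset]
    intro p hp q hq
    have hp2 : p.2 = (j:ℝ) := mem_singleton_iff.mp (Set.mem_prod.mp hp.2).2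
    have hq2 : q.2 = (j:ℝ) := mem_singleton_iff.mp (Set.mem_prod.mp hq.2).2
    rcases le_total p.1 q.1 with h | h
    · exact gDown_segment hC hCm hp hq h (by rw [hp2, hq2])
    · rw [segment_symm]
      exact gDown_segment hC hCm hq hp h (by rw [hp2, hq2])
  · have hC := convex_DfreeR m n x y ε (i := i) (j := j) hj1
    have hCm : ∀ a ∈ cellR i j, 0 ≤ a.2 ∧ 0 ≤ a.1 ∧ a.1 ≤ 2*(m:ℝ) := by
      intro a ha
      obtain ⟨h1, h2⟩ := Set.mem_prod.mp ha
      rw [mem_singleton_iff] at h1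
      exact ⟨by linarith [h2.1], by rw [h1]; positivity, by rw [h1]; exact hi2'⟩
    rw [convex_iff_segment_subset]
    intro p hp q hq
    have hp1 : p.1 = (i:ℝ) := mem_singleton_iff.mp (Set.mem_prod.mp hp.2).1
    have hq1 : q.1 = (i:ℝ) := mem_singleton_iff.mp (Set.mem_prod.mp hq.2).1
    rcases le_total p.2 q.2 with h | h
    · exact gDown_segment hC hCm hp hq (by rw [hp1, hq1]) h
    · rw [segment_symm]
      exact gDown_segment hC hCm hq hp (by rw [hp1, hq1]) h
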